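/- For every B > 0 and every real x, ∫_0^∞ (B/√(2πu³)) · e^{−B²/(2u) − x²u/2} du = e^{−B|x|}. -/

import Mathlib

open MeasureTheory Real Set

lemma sqrt_cube {u : ℝ} (hu : 0 ≤ u) : Real.sqrt (u^3) = u * Real.sqrt u := by
  rw [show u^3 = (u * Real.sqrt u)^2 by rw [mul_pow, Real.sq_sqrt hu]; ring]
  exact Real.sqrt_sq (by positivity)

lemma image_div_Ioi (a : ℝ) (ha : 0 < a) : (fun v : ℝ => a / v) '' Ioi 0 = Ioi 0 := by
  ext u
  constructor
  · rintro ⟨v, hv, rfl⟩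
    exact div_pos ha hv
  · intro hu
    exact ⟨a / u, div_pos ha hu, by field_simp⟩

lemma hasDeriv_div (a : ℝ) {v : ℝ} (hv : 0 < v) :
    HasDerivWithinAt (fun v : ℝ => a / v) (-(a / v^2)) (Ioi 0) v := by
  have := (hasDerivAt_inv hv.ne').const_mul a
  simpa [div_eq_mul_inv, mul_comm, mul_assoc, neg_div] using this.hasDerivWithinAt

lemma case_zero (B : ℝ) (hB : 0 < B) :
    ∫ u in Ioi (0:ℝ), (B / Real.sqrt (2 * π * u^3)) * Real.exp (-(B^2 / (2*u))) = 1 := by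
  have himg : (fun s : ℝ => B^2 / s^2) '' Ioi 0 = Ioi 0 := by
    ext u
    constructor
    · rintro ⟨s, hs, rfl⟩
      have hs' : (0:ℝ) < s := hs
      show (0:ℝ) < B^2 / s^2
      positivity
    · intro hu
      have hu' : (0:ℝ) < u := hu
      refine ⟨B / Real.sqrt u, mem_Ioi.2 (by positivity), ?_⟩
      show B^2 / (B / Real.sqrt u)^2 = u
      rw [div_pow, Real.sq_sqrt (le_of_lt hu')]
      field_simp
  have hderiv : ∀ s ∈ Ioi (0:ℝ), HasDerivWithinAt (fun s : ℝ => B^2 / s^2)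
      (-(2 * B^2 / s^3)) (Ioi 0) s := by
    intro s hs
    have hs' : (0:ℝ) < s := hs
    have hs0 : (s:ℝ) ≠ 0 := ne_of_gt hs'
    have h2 : HasDerivAt (fun s : ℝ => B^2 * (s^2)⁻¹) (B^2 * (-(2*s) / (s^2)^2)) s := by
      have := ((hasDerivAt_pow 2 s).inv (pow_ne_zero 2 hs0)).const_mul (B^2)
      norm_num at this
      convert this using 1
    have h2' : HasDerivWithinAt (fun s : ℝ => B^2/s^2) (B^2 * (-(2*s) / (s^2)^2)) (Ioi 0) s := by
      simp only [div_eq_mul_inv]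
      exact h2.hasDerivWithinAt
    convert h2' using 1
    field_simp
  have hinj : InjOn (fun s : ℝ => B^2 / s^2) (Ioi 0) := by
    intro a ha b hb hab
    have ha' : (0:ℝ) < a := ha
    have hb' : (0:ℝ) < b := hb
    simp only at hab
    field_simp at hab
    nlinarith [hab, ha', hb', sq_nonneg (a-b), sq_nonneg (a+b)]
  set g : ℝ → ℝ := fun u => (B / Real.sqrt (2 * π * u^3)) * Real.exp (-(B^2 / (2*u))) with hg
  calc ∫ u in Ioi (0:ℝ), g u = ∫ u in (fun s : ℝ => B^2 / s^2) '' Ioi 0, g u := by rw [himg]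
    _ = ∫ s in Ioi (0:ℝ), |(-(2 * B^2 / s^3))| • g (B^2 / s^2) :=
        integral_image_eq_integral_abs_deriv_smul measurableSet_Ioi hderiv hinj g
    _ = ∫ s in Ioi (0:ℝ), (2 / Real.sqrt (2 * π)) * Real.exp (-(1/2) * s^2) := by
        refine setIntegral_congr_fun measurableSet_Ioi fun s hs => ?_
        have hs : (0:ℝ) < s := hs
        have hsq : Real.sqrt (2 * π * (B^2/s^2)^3) = Real.sqrt (2*π) * (B^3 / s^3) := by
          rw [show 2 * π * (B^2/s^2)^3 = (Real.sqrt (2*π) * (B^3 / s^3))^2 by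
            rw [mul_pow, Real.sq_sqrt (by positivity : (0:ℝ) ≤ 2*π)]; field_simp]
          exact Real.sqrt_sq (by positivity)
        have hexp : -(B^2 / (2 * (B^2/s^2))) = -(1/2) * s^2 := by field_simp
        rw [smul_eq_mul, hg]
        simp only
        rw [hsq, hexp, abs_of_nonpos (neg_nonpos.2 (by positivity) : -(2 * B^2 / s^3) ≤ 0)]
        have h2π : (0:ℝ) < Real.sqrt (2*π) := Real.sqrt_pos.2 (by positivity)
        field_simp
    _ = 1 := by
        rw [MeasureTheory.integral_const_mul]
        have : ∫ s in Ioi (0:ℝ), Real.exp (-(1/2) * s^2) = Real.sqrt (π / (1/2)) / 2 :=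
          integral_gaussian_Ioi (1/2)
        rw [this, show π / (1/2:ℝ) = 2 * π by ring]
        have h2π : (0:ℝ) < Real.sqrt (2*π) := Real.sqrt_pos.2 (by positivity)
        field_simp

lemma sqrt_cube' {u : ℝ} (hu : 0 ≤ u) : Real.sqrt (u^3) = u * Real.sqrt u := by
  rw [show u^3 = (u * Real.sqrt u)^2 by rw [mul_pow, Real.sq_sqrt hu]; ring]
  exact Real.sqrt_sq (by positivity)

lemma sqrt_two_pi_mul' {w : ℝ} (hw : 0 ≤ w) :
    Real.sqrt (2*π*w^3) = Real.sqrt (2*π) * (w * Real.sqrt w) := by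
  rw [Real.sqrt_mul (by positivity), sqrt_cube' hw]

set_option maxHeartbeats 1000000 in
lemma case_pos (B c : ℝ) (hB : 0 < B) (hc : 0 < c) :
    ∫ u in Ioi (0:ℝ), (B / Real.sqrt (2 * π * u^3)) * Real.exp (-(B^2 / (2*u)) - c^2 * u / 2)
      = Real.exp (-(B * c)) := by
  have h2π : (0:ℝ) < Real.sqrt (2*π) := Real.sqrt_pos.2 (by positivity)
  set g : ℝ → ℝ := fun u => (B / Real.sqrt (2 * π * u^3)) *
      Real.exp (-(B^2 / (2*u)) - c^2 * u / 2) with hgdef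
  set j : ℝ → ℝ := fun u => (c / Real.sqrt (2 * π * u)) *
      Real.exp (-(B^2 / (2*u)) - c^2 * u / 2) with hjdef
  set m : ℝ → ℝ := fun u => c * Real.sqrt u - B / Real.sqrt u with hmdef
  set m' : ℝ → ℝ := fun u => c / (2 * Real.sqrt u) + B / (2 * u * Real.sqrt u) with hm'def
  set φ : ℝ → ℝ := fun s => 2 / Real.sqrt (2*π) * Real.exp (-(B*c)) *
      Real.exp (-(1/2) * s^2) with hφdef
  -- Step A : ∫ g = ∫ j  via v ↦ (B²/c²)/v
  have hIJ : ∫ u in Ioi (0:ℝ), g u = ∫ u in Ioi (0:ℝ), j u := by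
    have ha : (0:ℝ) < B^2/c^2 := by positivity
    have himg := image_div_Ioi (B^2/c^2) ha
    have hderiv : ∀ v ∈ Ioi (0:ℝ),
        HasDerivWithinAt (fun v : ℝ => B^2/c^2 / v) (-(B^2/c^2 / v^2)) (Ioi 0) v :=
      fun v hv => hasDeriv_div _ hv
    have hinj : InjOn (fun v : ℝ => B^2/c^2 / v) (Ioi 0) := by
      intro a' ha' b' hb' hab
      have ha'' : (0:ℝ) < a' := ha'
      have hb'' : (0:ℝ) < b' := hb'
      simp only at hab
      field_simp at hab
      nlinarith [hab, hB, hc]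
    calc ∫ u in Ioi (0:ℝ), g u = ∫ u in (fun v : ℝ => B^2/c^2 / v) '' Ioi 0, g u := by rw [himg]
      _ = ∫ v in Ioi (0:ℝ), |(-(B^2/c^2 / v^2))| • g (B^2/c^2 / v) :=
          integral_image_eq_integral_abs_deriv_smul measurableSet_Ioi hderiv hinj g
      _ = ∫ v in Ioi (0:ℝ), j v := by
          refine setIntegral_congr_fun measurableSet_Ioi fun v hv => ?_
          have hv' : (0:ℝ) < v := hv
          have hsv : (0:ℝ) < Real.sqrt v := Real.sqrt_pos.2 hv'
          have hav : (0:ℝ) < B^2/c^2/v := by positivity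
          have h1 : Real.sqrt (2*π*(B^2/c^2/v)^3)
              = Real.sqrt (2*π) * ((B^2/c^2/v) * ((B/c)/Real.sqrt v)) := by
            rw [sqrt_two_pi_mul' hav.le, Real.sqrt_div (by positivity) v,
              show B^2/c^2 = (B/c)^2 by ring, Real.sqrt_sq (by positivity)]
          have hexp : -(B^2 / (2 * (B^2/c^2/v))) - c^2 * (B^2/c^2/v) / 2
              = -(B^2 / (2*v)) - c^2 * v / 2 := by
            field_simp
            ring
          rw [smul_eq_mul, hgdef, hjdef]
          simp only
          rw [h1, hexp, abs_of_nonpos (neg_nonpos.2 (by positivity)),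
            Real.sqrt_mul (by positivity) v]
          set r := Real.sqrt v with hr
          have hr2 : r^2 = v := Real.sq_sqrt hv'.le
          rw [← hr2]
          field_simp
  -- Step B : image of m is all of ℝ
  have himg2 : m '' Ioi 0 = univ := by
    ext s
    simp only [mem_univ, iff_true]
    set D := Real.sqrt (s^2 + 4*B*c) with hDdef
    have hD2 : D^2 = s^2 + 4*B*c := Real.sq_sqrt (by positivity)
    have habs : |s| < D := by
      have h1 : Real.sqrt (s^2) < D := Real.sqrt_lt_sqrt (sq_nonneg s) (by nlinarith)
      rwa [Real.sqrt_sq_eq_abs] at h1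
    have hsD : 0 < s + D := by
      have := neg_abs_le s
      linarith
    set t := (s + D)/(2*c) with htdef
    have ht : 0 < t := div_pos hsD (by positivity)
    refine ⟨t^2, mem_Ioi.2 (by positivity), ?_⟩
    show c * Real.sqrt (t^2) - B / Real.sqrt (t^2) = s
    rw [Real.sqrt_sq ht.le]
    have key : c * t^2 - s * t - B = 0 := by
      rw [htdef]
      field_simp
      nlinarith [hD2]
    field_simp
    nlinarith [key]
  -- derivative of m
  have hm' : ∀ u ∈ Ioi (0:ℝ), HasDerivWithinAt m (m' u) (Ioi 0) u := by
    intro u hu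
    have hu' : (0:ℝ) < u := hu
    have hsu : (0:ℝ) < Real.sqrt u := Real.sqrt_pos.2 hu'
    have hsq : HasDerivAt Real.sqrt (1 / (2 * Real.sqrt u)) u := Real.hasDerivAt_sqrt hu'.ne'
    have h1 : HasDerivAt (fun u : ℝ => c * Real.sqrt u) (c * (1 / (2 * Real.sqrt u))) u :=
      hsq.const_mul c
    have h2 : HasDerivAt (fun u : ℝ => B * (Real.sqrt u)⁻¹)
        (B * (-(1 / (2 * Real.sqrt u)) / (Real.sqrt u)^2)) u := (hsq.inv hsu.ne').const_mul B
    have h3 := h1.sub h2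
    have heq : ∀ w : ℝ, c * Real.sqrt w - B * (Real.sqrt w)⁻¹ = m w := by
      intro w; rw [hmdef]; simp [div_eq_mul_inv]
    have h4 : HasDerivAt m
        (c * (1 / (2 * Real.sqrt u)) - B * (-(1 / (2 * Real.sqrt u)) / (Real.sqrt u)^2)) u := by
      refine HasDerivAt.congr_of_eventuallyEq h3 ?_
      filter_upwards with w using (heq w).symm
    have hval : c * (1 / (2 * Real.sqrt u)) - B * (-(1 / (2 * Real.sqrt u)) / (Real.sqrt u)^2)
        = m' u := by
      rw [hm'def]
      simp only
      set r := Real.sqrt u with hr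
      have hr2 : r^2 = u := Real.sq_sqrt hu'.le
      rw [← hr2]
      have hrne : r ≠ 0 := ne_of_gt hsu
      field_simp
      ring
    rw [← hval]
    exact h4.hasDerivWithinAt
  -- injectivity of m
  have hinj2 : InjOn m (Ioi 0) := by
    have hmono : StrictMonoOn m (Ioi 0) := by
      intro a ha b hb hab
      have ha' : (0:ℝ) < a := ha
      have hb' : (0:ℝ) < b := hb
      have h1 : Real.sqrt a < Real.sqrt b := Real.sqrt_lt_sqrt ha'.le hab
      have h2 : (0:ℝ) < Real.sqrt a := Real.sqrt_pos.2 ha'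
      have h3 : B / Real.sqrt b < B / Real.sqrt a := div_lt_div_of_pos_left hB h2 h1
      have h4 : c * Real.sqrt a < c * Real.sqrt b := by nlinarith
      show c * Real.sqrt a - B / Real.sqrt a < c * Real.sqrt b - B / Real.sqrt b
      linarith
    exact hmono.injOn
  -- pointwise identity  |m'| • φ ∘ m = g + j  on Ioi 0
  have hpt : ∀ u ∈ Ioi (0:ℝ), |m' u| • φ (m u) = g u + j u := by
    intro u hu
    have hu' : (0:ℝ) < u := hu
    have hsu : (0:ℝ) < Real.sqrt u := Real.sqrt_pos.2 hu'
    have hm'pos : 0 < m' u := by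
      rw [hm'def]; positivity
    have hexp : Real.exp (-(B*c)) * Real.exp (-(1/2) * (m u)^2)
        = Real.exp (-(B^2 / (2*u)) - c^2 * u / 2) := by
      rw [← Real.exp_add]
      congr 1
      rw [hmdef]
      simp only
      set r := Real.sqrt u with hr
      have hr2 : r^2 = u := Real.sq_sqrt hu'.le
      rw [← hr2]
      have hrne : r ≠ 0 := ne_of_gt hsu
      field_simp
      ring
    have hφm : φ (m u) = 2 / Real.sqrt (2*π) * Real.exp (-(B^2 / (2*u)) - c^2 * u / 2) := by
      rw [hφdef]
      simp only
      rw [mul_assoc, hexp]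
    rw [smul_eq_mul, abs_of_pos hm'pos, hφm, hgdef, hjdef, hm'def]
    simp only
    rw [sqrt_two_pi_mul' hu'.le, Real.sqrt_mul (by positivity : (0:ℝ) ≤ 2*π) u]
    set r := Real.sqrt u with hr
    have hr2 : r^2 = u := Real.sq_sqrt hu'.le
    rw [← hr2]
    have hrne : r ≠ 0 := ne_of_gt hsu
    field_simp
    ring
  -- integrability of φ
  have hφint : Integrable φ := by
    have := integrable_exp_neg_mul_sq (show (0:ℝ) < 1/2 by norm_num)
    exact (this.const_mul _)
  -- ∫ φ = 2 exp(-Bc)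
  have hφval : ∫ s : ℝ, φ s = 2 * Real.exp (-(B*c)) := by
    rw [hφdef]
    simp only
    rw [MeasureTheory.integral_const_mul]
    rw [integral_gaussian (1/2), show π / (1/2:ℝ) = 2*π by ring]
    field_simp
  -- change of variables for the sum
  have hsum : ∫ u in Ioi (0:ℝ), (g u + j u) = 2 * Real.exp (-(B*c)) := by
    have h1 : ∫ s : ℝ, φ s = ∫ u in Ioi (0:ℝ), |m' u| • φ (m u) := by
      rw [← setIntegral_univ, ← himg2]
      exact integral_image_eq_integral_abs_deriv_smul measurableSet_Ioi hm' hinj2 φ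
    rw [← hφval, h1]
    exact setIntegral_congr_fun measurableSet_Ioi fun u hu => (hpt u hu).symm
  -- integrability of g + j
  have hint_sum : IntegrableOn (fun u => g u + j u) (Ioi 0) := by
    have h1 : IntegrableOn φ ((fun u => m u) '' Ioi 0) := by
      rw [show (fun u => m u) '' Ioi 0 = univ from himg2]
      exact hφint.integrableOn
    have h2 := (integrableOn_image_iff_integrableOn_abs_deriv_smul measurableSet_Ioi hm'
      hinj2 φ).1 h1
    exact h2.congr_fun (fun u hu => hpt u hu) measurableSet_Ioi
  have hgmeas : Measurable g := by
    rw [hgdef]; fun_prop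
  have hjmeas : Measurable j := by
    rw [hjdef]; fun_prop
  have hgnn : ∀ u, 0 ≤ g u := fun u => by rw [hgdef]; positivity
  have hjnn : ∀ u, 0 ≤ j u := fun u => by rw [hjdef]; positivity
  have hgint : IntegrableOn g (Ioi 0) := by
    refine MeasureTheory.Integrable.mono hint_sum (hgmeas.aestronglyMeasurable.restrict) (ae_of_all _ fun u => ?_)
    rw [Real.norm_of_nonneg (hgnn u), Real.norm_of_nonneg (by positivity)]
    linarith [hjnn u]
  have hjint : IntegrableOn j (Ioi 0) := by
    refine MeasureTheory.Integrable.mono hint_sum (hjmeas.aestronglyMeasurable.restrict) (ae_of_all _ fun u => ?_)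
    rw [Real.norm_of_nonneg (hjnn u), Real.norm_of_nonneg (by positivity)]
    linarith [hgnn u]
  have hadd : ∫ u in Ioi (0:ℝ), (g u + j u)
      = (∫ u in Ioi (0:ℝ), g u) + ∫ u in Ioi (0:ℝ), j u := integral_add hgint hjint
  rw [hadd] at hsum
  rw [← hIJ] at hsum
  linarith


/-- The Gaussian mixture of the one-sided stable `1/2` subordinator kernel
`B (2πu³)^{-1/2} e^{-B²/(2u)}` is the two-sided exponential `e^{-B|x|}`. -/
theorem stable_half_gaussian_mixture (B : ℝ) (hB : 0 < B) (x : ℝ) :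
    ∫ u in Ioi (0:ℝ), (B / Real.sqrt (2 * π * u^3)) *
        Real.exp (-(B^2 / (2*u)) - x^2 * u / 2) =
      Real.exp (-(B * |x|)) := by
  rcases eq_or_ne x 0 with rfl | hx
  · simp only [ne_eq, OfNat.ofNat_ne_zero, not_false_eq_true, zero_pow, zero_mul, zero_div,
      sub_zero, abs_zero, mul_zero, neg_zero, Real.exp_zero]
    exact case_zero B hB
  · have hc : 0 < |x| := abs_pos.2 hx
    rw [show x^2 = |x|^2 from (sq_abs x).symm]
    exact case_pos B |x| hB hc
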